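/- Let 0 < s < 1, 1 < r₂ < r₁ < ∞, Ω bounded open, u ∈ W₀^{s,r₁}(Ω) nonnegative, v ∈ W₀^{s,r₁}(Ω) ∩ L^∞(Ω), and k ∈ ℕ with u_k := u + 1/k. Then the function φ_k := |v|^{r₁}/(u_k^{r₁-1} + u_k^{r₂-1}) belongs to W₀^{s,r₁}(Ω); in particular there is a constant C = C(r₁, r₂, k, ‖v‖_∞) such that |φ_k(x) - φ_k(y)| ≤ C(|v(x)-v(y)| + |u(x)-u(y)|) for all x, y ∈ ℝ^d. -/

import Mathlib

open MeasureTheory Real ENNReal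

noncomputable section

abbrev Rd (d : ℕ) := EuclideanSpace ℝ (Fin d)

/-- Gagliardo energy `∬ |u(x)-u(y)|^r / |x-y|^{d+sr} dx dy` as an `ℝ≥0∞`-valued integral. -/
def gEnergy (d : ℕ) (s r : ℝ) (u : Rd d → ℝ) : ℝ≥0∞ :=
  ∫⁻ x : Rd d, ∫⁻ y : Rd d,
    ENNReal.ofReal (|u x - u y| ^ r / ‖x - y‖ ^ ((d : ℝ) + s * r))

/-- Gagliardo seminorm `[u]_{s,r}`. -/
def gSemi (d : ℕ) (s r : ℝ) (u : Rd d → ℝ) : ℝ :=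
  (gEnergy d s r u).toReal ^ (1 / r)

/-- Membership in `W₀^{s,r}(Ω)`: `u ∈ L^r`, finite Gagliardo energy, `u = 0` outside `Ω`. -/
def memW0 (d : ℕ) (Ω : Set (Rd d)) (s r : ℝ) (u : Rd d → ℝ) : Prop :=
  MemLp u (ENNReal.ofReal r) volume ∧ gEnergy d s r u ≠ ⊤ ∧ ∀ x ∉ Ω, u x = 0

/-- The nonlocal energy form `⟨A_r(u), φ⟩` of the fractional `r`-Laplacian `(-Δ)^s_r`. -/
def formA (d : ℕ) (s r : ℝ) (u φ : Rd d → ℝ) : ℝ :=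
  ∫ x : Rd d, ∫ y : Rd d,
    |u x - u y| ^ (r - 2) * (u x - u y) * (φ x - φ y) / ‖x - y‖ ^ ((d : ℝ) + s * r)

/-- `u` is a weak solution of `(EV; α, β)`:
`(-Δ)^{s₁}_p u + (-Δ)^{s₂}_q u = α|u|^{p-2}u + β|u|^{q-2}u` in `Ω`, `u = 0` outside `Ω`. -/
def isWeakSol (d : ℕ) (Ω : Set (Rd d)) (s₁ s₂ p q α β : ℝ) (u : Rd d → ℝ) : Prop :=
  memW0 d Ω s₁ p u ∧ ∀ φ : Rd d → ℝ, memW0 d Ω s₁ p φ →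
    formA d s₁ p u φ + formA d s₂ q u φ =
      α * ∫ x in Ω, |u x| ^ (p - 2) * u x * φ x +
        β * ∫ x in Ω, |u x| ^ (q - 2) * u x * φ x

/-- The first Dirichlet eigenvalue `λ¹_{s,r}(Ω)` via the Rayleigh quotient. -/
def lam1 (d : ℕ) (Ω : Set (Rd d)) (s r : ℝ) : ℝ :=
  sInf {t : ℝ | ∃ u : Rd d → ℝ, memW0 d Ω s r u ∧
    (∫ x in Ω, |u x| ^ r) = 1 ∧ t = gSemi d s r u ^ r}

/-- The energy functional `I₊`. -/
def Iplus (d : ℕ) (Ω : Set (Rd d)) (s₁ s₂ p q α β : ℝ) (u : Rd d → ℝ) : ℝ :=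
  gSemi d s₁ p u ^ p / p + gSemi d s₂ q u ^ q / q
    - α * (∫ x in Ω, max (u x) 0 ^ p) / p - β * (∫ x in Ω, max (u x) 0 ^ q) / q


section Helpers
open Set

lemma lipOn {f f' : ℝ → ℝ} {s : Set ℝ} (hs : Convex ℝ s)
    (hd : ∀ t ∈ s, HasDerivAt f (f' t) t) {C : ℝ}
    (hC : ∀ t ∈ s, |f' t| ≤ C) :
    ∀ a ∈ s, ∀ b ∈ s, |f a - f b| ≤ C * |a - b| := by
  intro a ha b hb
  have := hs.norm_image_sub_le_of_norm_hasDerivWithin_le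
    (fun t ht => (hd t ht).hasDerivWithinAt) (fun t ht => by simpa using hC t ht) hb ha
  simpa [Real.norm_eq_abs] using this


lemma powLip {γ M : ℝ} (hγ : 1 ≤ γ) (hM : 0 ≤ M) :
    ∀ a ∈ Icc (0:ℝ) M, ∀ b ∈ Icc (0:ℝ) M,
      |a ^ γ - b ^ γ| ≤ (γ * M ^ (γ - 1)) * |a - b| := by
  refine lipOn (convex_Icc 0 M) (fun t ht => Real.hasDerivAt_rpow_const (Or.inr hγ)) ?_
  intro t ht
  rw [abs_of_nonneg (mul_nonneg (by linarith) (Real.rpow_nonneg ht.1 _))]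
  exact mul_le_mul_of_nonneg_left
    (Real.rpow_le_rpow ht.1 ht.2 (by linarith)) (by linarith)


lemma invLip {r₁ r₂ ε : ℝ} (hε : 0 < ε) (hr₂ : 1 < r₂) (hr : r₂ < r₁) :
    ∀ a ∈ Ici ε, ∀ b ∈ Ici ε,
      |(a ^ (r₁-1) + a ^ (r₂-1))⁻¹ - (b ^ (r₁-1) + b ^ (r₂-1))⁻¹| ≤
        ((r₁ + r₂) / (ε * (ε ^ (r₁-1) + ε ^ (r₂-1)))) * |a - b| := by
  refine lipOn (convex_Ici ε)
    (f' := fun t => -((r₁-1) * t ^ (r₁-1-1) + (r₂-1) * t ^ (r₂-1-1)) /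
      (t ^ (r₁-1) + t ^ (r₂-1)) ^ 2) ?_ ?_
  · intro t ht
    have ht' : 0 < t := lt_of_lt_of_le hε ht
    have h1 : HasDerivAt (fun t : ℝ => t ^ (r₁-1)) ((r₁-1) * t ^ (r₁-1-1)) t :=
      Real.hasDerivAt_rpow_const (Or.inl ht'.ne')
    have h2 : HasDerivAt (fun t : ℝ => t ^ (r₂-1)) ((r₂-1) * t ^ (r₂-1-1)) t :=
      Real.hasDerivAt_rpow_const (Or.inl ht'.ne')
    have hne : t ^ (r₁-1) + t ^ (r₂-1) ≠ 0 := by positivity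
    exact (h1.add h2).inv hne
  · intro t ht
    have ht' : 0 < t := lt_of_lt_of_le hε ht
    set A := t ^ (r₁-1) with hA
    set B := t ^ (r₂-1) with hB
    have hA0 : 0 < A := Real.rpow_pos_of_pos ht' _
    have hB0 : 0 < B := Real.rpow_pos_of_pos ht' _
    have hmA : ε ^ (r₁-1) ≤ A := Real.rpow_le_rpow hε.le ht (by linarith)
    have hmB : ε ^ (r₂-1) ≤ B := Real.rpow_le_rpow hε.le ht (by linarith)
    have hεA : 0 < ε ^ (r₁-1) := Real.rpow_pos_of_pos hε _
    have hεB : 0 < ε ^ (r₂-1) := Real.rpow_pos_of_pos hε _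
    have tA : t ^ (r₁-1-1) = A / t := by
      rw [Real.rpow_sub ht', Real.rpow_one]
    have tB : t ^ (r₂-1-1) = B / t := by
      rw [Real.rpow_sub ht', Real.rpow_one]
    simp only [tA, tB, abs_div, abs_neg]
    have hnum : 0 ≤ (r₁-1) * (A/t) + (r₂-1) * (B/t) :=
      add_nonneg (mul_nonneg (by linarith) (by positivity))
        (mul_nonneg (by linarith) (by positivity))
    rw [abs_of_nonneg hnum, abs_of_nonneg (by positivity : (0:ℝ) ≤ (A+B)^2)]
    rw [div_le_div_iff₀ (by positivity) (by positivity)]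
    have hAt : A / t ≤ A / ε := div_le_div_of_nonneg_left hA0.le hε ht
    have hBt : B / t ≤ B / ε := div_le_div_of_nonneg_left hB0.le hε ht
    have step1 : ((r₁-1) * (A/t) + (r₂-1) * (B/t)) * (ε * (ε ^ (r₁-1) + ε ^ (r₂-1))) ≤
        ((r₁-1) * (A/ε) + (r₂-1) * (B/ε)) * (ε * (ε ^ (r₁-1) + ε ^ (r₂-1))) := by
      apply mul_le_mul_of_nonneg_right _ (by positivity)
      exact add_le_add (mul_le_mul_of_nonneg_left hAt (by linarith))
        (mul_le_mul_of_nonneg_left hBt (by linarith))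
    have step2 : ((r₁-1) * (A/ε) + (r₂-1) * (B/ε)) * (ε * (ε ^ (r₁-1) + ε ^ (r₂-1))) =
        ((r₁-1) * A + (r₂-1) * B) * (ε ^ (r₁-1) + ε ^ (r₂-1)) := by
      field_simp
    have hm : ε ^ (r₁-1) + ε ^ (r₂-1) ≤ A + B := by linarith
    have hN : 0 ≤ (r₁-1) * A + (r₂-1) * B :=
      add_nonneg (mul_nonneg (by linarith) hA0.le) (mul_nonneg (by linarith) hB0.le)
    have hN2 : (r₁-1) * A + (r₂-1) * B ≤ (r₁+r₂) * (A+B) := by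
      nlinarith [mul_nonneg (show (0:ℝ) ≤ r₂+1 by linarith) hA0.le,
        mul_nonneg (show (0:ℝ) ≤ r₁+1 by linarith) hB0.le]
    have step3 : ((r₁-1) * A + (r₂-1) * B) * (ε ^ (r₁-1) + ε ^ (r₂-1)) ≤
        (r₁ + r₂) * (A + B) ^ 2 := by
      calc ((r₁-1) * A + (r₂-1) * B) * (ε ^ (r₁-1) + ε ^ (r₂-1))
          ≤ ((r₁-1) * A + (r₂-1) * B) * (A+B) := mul_le_mul_of_nonneg_left hm hN
        _ ≤ ((r₁+r₂) * (A+B)) * (A+B) := mul_le_mul_of_nonneg_right hN2 (by positivity)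
        _ = (r₁+r₂) * (A+B) ^ 2 := by ring
    linarith


lemma ptBound {r₁ r₂ M ε : ℝ} (hr₂ : 1 < r₂) (hr : r₂ < r₁) (hM : 0 ≤ M) (hε : 0 < ε) :
    ∃ C : ℝ, 0 < C ∧ ∀ a b va vb : ℝ, ε ≤ a → ε ≤ b → |va| ≤ M → |vb| ≤ M →
      |(|va| ^ r₁ / (a ^ (r₁-1) + a ^ (r₂-1))) - |vb| ^ r₁ / (b ^ (r₁-1) + b ^ (r₂-1))| ≤
        C * (|va - vb| + |a - b|) := by
  have hm0 : 0 < ε ^ (r₁-1) + ε ^ (r₂-1) := by positivity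
  have hL0 : 0 ≤ (r₁ + r₂) / (ε * (ε ^ (r₁-1) + ε ^ (r₂-1))) :=
    div_nonneg (by linarith) (by positivity)
  have hc1 : 0 ≤ r₁ * M ^ (r₁-1) / (ε ^ (r₁-1) + ε ^ (r₂-1)) :=
    div_nonneg (mul_nonneg (by linarith) (Real.rpow_nonneg hM _)) hm0.le
  have hc2 : 0 ≤ M ^ r₁ * ((r₁ + r₂) / (ε * (ε ^ (r₁-1) + ε ^ (r₂-1)))) :=
    mul_nonneg (Real.rpow_nonneg hM _) hL0
  refine ⟨r₁ * M ^ (r₁-1) / (ε ^ (r₁-1) + ε ^ (r₂-1))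
    + M ^ r₁ * ((r₁ + r₂) / (ε * (ε ^ (r₁-1) + ε ^ (r₂-1)))) + 1, by linarith, ?_⟩
  intro a b va vb ha hb hva hvb
  have ha0 : 0 < a := lt_of_lt_of_le hε ha
  have hb0 : 0 < b := lt_of_lt_of_le hε hb
  have hgam : ε ^ (r₁-1) + ε ^ (r₂-1) ≤ a ^ (r₁-1) + a ^ (r₂-1) :=
    add_le_add (Real.rpow_le_rpow hε.le ha (by linarith))
      (Real.rpow_le_rpow hε.le ha (by linarith))
  have hgbm : ε ^ (r₁-1) + ε ^ (r₂-1) ≤ b ^ (r₁-1) + b ^ (r₂-1) :=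
    add_le_add (Real.rpow_le_rpow hε.le hb (by linarith))
      (Real.rpow_le_rpow hε.le hb (by linarith))
  have hgap : 0 < a ^ (r₁-1) + a ^ (r₂-1) := lt_of_lt_of_le hm0 hgam
  have hgbp : 0 < b ^ (r₁-1) + b ^ (r₂-1) := lt_of_lt_of_le hm0 hgbm
  have hfa : |va| ^ r₁ ≤ M ^ r₁ := Real.rpow_le_rpow (abs_nonneg _) hva (by linarith)
  have key : |va| ^ r₁ / (a ^ (r₁-1) + a ^ (r₂-1)) - |vb| ^ r₁ / (b ^ (r₁-1) + b ^ (r₂-1))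
      = |va| ^ r₁ * ((a ^ (r₁-1) + a ^ (r₂-1))⁻¹ - (b ^ (r₁-1) + b ^ (r₂-1))⁻¹)
        + (|va| ^ r₁ - |vb| ^ r₁) * (b ^ (r₁-1) + b ^ (r₂-1))⁻¹ := by
    field_simp
    ring
  have t1 := invLip hε hr₂ hr a ha b hb
  have t2 : |(|va| ^ r₁) - |vb| ^ r₁| ≤ (r₁ * M ^ (r₁-1)) * |(|va|) - (|vb|)| :=
    powLip (by linarith) hM _ ⟨abs_nonneg _, hva⟩ _ ⟨abs_nonneg _, hvb⟩
  have t2' : |(|va|) - (|vb|)| ≤ |va - vb| := abs_abs_sub_abs_le_abs_sub _ _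
  have hinv : (b ^ (r₁-1) + b ^ (r₂-1))⁻¹ ≤ (ε ^ (r₁-1) + ε ^ (r₂-1))⁻¹ :=
    inv_anti₀ hm0 hgbm
  have e1 : |va| ^ r₁ * |(a ^ (r₁-1) + a ^ (r₂-1))⁻¹ - (b ^ (r₁-1) + b ^ (r₂-1))⁻¹|
      ≤ M ^ r₁ * (((r₁ + r₂) / (ε * (ε ^ (r₁-1) + ε ^ (r₂-1)))) * |a - b|) :=
    mul_le_mul hfa t1 (abs_nonneg _) (Real.rpow_nonneg hM _)
  have e2 : |(|va| ^ r₁) - |vb| ^ r₁| * (b ^ (r₁-1) + b ^ (r₂-1))⁻¹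
      ≤ ((r₁ * M ^ (r₁-1)) * |va - vb|) * (ε ^ (r₁-1) + ε ^ (r₂-1))⁻¹ := by
    apply mul_le_mul _ hinv (inv_nonneg.2 hgbp.le)
      (mul_nonneg (mul_nonneg (by linarith) (Real.rpow_nonneg hM _)) (abs_nonneg _))
    exact t2.trans (mul_le_mul_of_nonneg_left t2'
      (mul_nonneg (by linarith) (Real.rpow_nonneg hM _)))
  have habs : |(|va| ^ r₁ / (a ^ (r₁-1) + a ^ (r₂-1))) - |vb| ^ r₁ / (b ^ (r₁-1) + b ^ (r₂-1))|
      ≤ |va| ^ r₁ * |(a ^ (r₁-1) + a ^ (r₂-1))⁻¹ - (b ^ (r₁-1) + b ^ (r₂-1))⁻¹|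
        + |(|va| ^ r₁) - |vb| ^ r₁| * (b ^ (r₁-1) + b ^ (r₂-1))⁻¹ := by
    rw [key]
    refine (abs_add_le _ _).trans ?_
    rw [abs_mul, abs_mul, abs_of_nonneg (Real.rpow_nonneg (abs_nonneg _) _),
      abs_of_nonneg (inv_nonneg.2 hgbp.le)]
  refine (habs.trans (add_le_add e1 e2)).trans ?_
  have p1 : M ^ r₁ * ((r₁ + r₂) / (ε * (ε ^ (r₁-1) + ε ^ (r₂-1)))) * |a - b|
      ≤ (r₁ * M ^ (r₁-1) / (ε ^ (r₁-1) + ε ^ (r₂-1))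
        + M ^ r₁ * ((r₁ + r₂) / (ε * (ε ^ (r₁-1) + ε ^ (r₂-1)))) + 1) * |a - b| :=
    mul_le_mul_of_nonneg_right (by linarith) (abs_nonneg _)
  have p2 : (r₁ * M ^ (r₁-1) / (ε ^ (r₁-1) + ε ^ (r₂-1))) * |va - vb|
      ≤ (r₁ * M ^ (r₁-1) / (ε ^ (r₁-1) + ε ^ (r₂-1))
        + M ^ r₁ * ((r₁ + r₂) / (ε * (ε ^ (r₁-1) + ε ^ (r₂-1)))) + 1) * |va - vb| :=
    mul_le_mul_of_nonneg_right (by linarith) (abs_nonneg _)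
  have hx : ((r₁ * M ^ (r₁-1)) * |va - vb|) * (ε ^ (r₁-1) + ε ^ (r₂-1))⁻¹
      = (r₁ * M ^ (r₁-1) / (ε ^ (r₁-1) + ε ^ (r₂-1))) * |va - vb| := by ring
  rw [hx, mul_add _ |va - vb| |a - b|]
  have n1 := abs_nonneg (va - vb)
  have n2 := abs_nonneg (a - b)
  linarith


lemma gEnergy_congr {d : ℕ} {s r : ℝ} {f g : Rd d → ℝ} (h : f =ᵐ[volume] g) :
    gEnergy d s r f = gEnergy d s r g := by
  unfold gEnergy
  apply lintegral_congr_ae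
  filter_upwards [h] with x hx
  apply lintegral_congr_ae
  filter_upwards [h] with y hy
  rw [hx, hy]

lemma realIneq {r C c e : ℝ} (hr : 0 ≤ r) (hC : 0 ≤ C) (hc : 0 ≤ c) (he : 0 ≤ e) :
    (C * (c + e)) ^ r ≤ C ^ r * 2 ^ r * (c ^ r + e ^ r) := by
  have h1 : c + e ≤ 2 * max c e := by
    rcases le_total c e with h | h
    · rw [max_eq_right h]; linarith
    · rw [max_eq_left h]; linarith
  have h2 : (max c e) ^ r ≤ c ^ r + e ^ r := by
    rcases le_total c e with h | h
    · rw [max_eq_right h]; exact le_add_of_nonneg_left (Real.rpow_nonneg hc _)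
    · rw [max_eq_left h]; exact le_add_of_nonneg_right (Real.rpow_nonneg he _)
  calc (C * (c + e)) ^ r = C ^ r * (c + e) ^ r :=
        Real.mul_rpow hC (by linarith)
    _ ≤ C ^ r * (2 * max c e) ^ r :=
        mul_le_mul_of_nonneg_left (Real.rpow_le_rpow (by linarith) h1 hr)
          (Real.rpow_nonneg hC _)
    _ = C ^ r * (2 ^ r * (max c e) ^ r) := by
        rw [Real.mul_rpow (by norm_num) (le_max_of_le_left hc)]
    _ ≤ C ^ r * (2 ^ r * (c ^ r + e ^ r)) :=
        mul_le_mul_of_nonneg_left (mul_le_mul_of_nonneg_left h2 (by positivity))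
          (Real.rpow_nonneg hC _)
    _ = C ^ r * 2 ^ r * (c ^ r + e ^ r) := by ring

set_option maxHeartbeats 1000000 in
lemma energyBound {d : ℕ} {s r C : ℝ} (hr : 0 ≤ r) (hC : 0 ≤ C)
    {u' v' φ' : Rd d → ℝ} (hum : Measurable u') (hvm : Measurable v')
    (hpt : ∀ x y, |φ' x - φ' y| ≤ C * (|v' x - v' y| + |u' x - u' y|)) :
    gEnergy d s r φ' ≤
      ENNReal.ofReal (C ^ r * 2 ^ r) * (gEnergy d s r v' + gEnergy d s r u') := by
  set D := (d : ℝ) + s * r with hD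
  set K := C ^ r * 2 ^ r with hK
  have hK0 : 0 ≤ K := by positivity
  have hFv : Measurable fun p : Rd d × Rd d =>
      ENNReal.ofReal (|v' p.1 - v' p.2| ^ r / ‖p.1 - p.2‖ ^ D) := by
    apply Measurable.ennreal_ofReal
    exact (((hvm.comp measurable_fst).sub (hvm.comp measurable_snd)).abs.pow_const _).div
      (((measurable_fst.sub measurable_snd).norm).pow_const _)
  have hFu : Measurable fun p : Rd d × Rd d =>
      ENNReal.ofReal (|u' p.1 - u' p.2| ^ r / ‖p.1 - p.2‖ ^ D) := by
    apply Measurable.ennreal_ofReal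
    exact (((hum.comp measurable_fst).sub (hum.comp measurable_snd)).abs.pow_const _).div
      (((measurable_fst.sub measurable_snd).norm).pow_const _)
  have hpw : ∀ x y : Rd d,
      ENNReal.ofReal (|φ' x - φ' y| ^ r / ‖x - y‖ ^ D) ≤
        ENNReal.ofReal K * ENNReal.ofReal (|v' x - v' y| ^ r / ‖x - y‖ ^ D) +
        ENNReal.ofReal K * ENNReal.ofReal (|u' x - u' y| ^ r / ‖x - y‖ ^ D) := by
    intro x y
    set w := ‖x - y‖ ^ D with hw
    have hw0 : 0 ≤ w := Real.rpow_nonneg (norm_nonneg _) _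
    have h1 : |φ' x - φ' y| ^ r ≤ K * (|v' x - v' y| ^ r + |u' x - u' y| ^ r) :=
      (Real.rpow_le_rpow (abs_nonneg _) (hpt x y) hr).trans
        (realIneq hr hC (abs_nonneg _) (abs_nonneg _))
    have h2 : |φ' x - φ' y| ^ r / w ≤
        K * |v' x - v' y| ^ r / w + K * |u' x - u' y| ^ r / w := by
      rw [← add_div, div_eq_mul_inv, div_eq_mul_inv, ← mul_add]
      exact mul_le_mul_of_nonneg_right (by linarith [h1]) (inv_nonneg.2 hw0)
    refine (ENNReal.ofReal_le_ofReal h2).trans ?_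
    refine (ENNReal.ofReal_add_le).trans ?_
    rw [mul_div_assoc, mul_div_assoc, ENNReal.ofReal_mul hK0, ENNReal.ofReal_mul hK0]
  have hMv : Measurable fun x : Rd d =>
      ∫⁻ y, ENNReal.ofReal (|v' x - v' y| ^ r / ‖x - y‖ ^ D) :=
    hFv.lintegral_prod_right'
  have hMu : Measurable fun x : Rd d =>
      ∫⁻ y, ENNReal.ofReal (|u' x - u' y| ^ r / ‖x - y‖ ^ D) :=
    hFu.lintegral_prod_right'
  calc gEnergy d s r φ'
      ≤ ∫⁻ x : Rd d, ∫⁻ y : Rd d,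
          (ENNReal.ofReal K * ENNReal.ofReal (|v' x - v' y| ^ r / ‖x - y‖ ^ D) +
           ENNReal.ofReal K * ENNReal.ofReal (|u' x - u' y| ^ r / ‖x - y‖ ^ D)) := by
        unfold gEnergy
        exact lintegral_mono fun x => lintegral_mono fun y => hpw x y
    _ = ∫⁻ x : Rd d,
          (ENNReal.ofReal K * ∫⁻ y, ENNReal.ofReal (|v' x - v' y| ^ r / ‖x - y‖ ^ D)) +
          (ENNReal.ofReal K * ∫⁻ y, ENNReal.ofReal (|u' x - u' y| ^ r / ‖x - y‖ ^ D)) := by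
        apply lintegral_congr fun x => ?_
        have m1 : Measurable fun y : Rd d =>
            ENNReal.ofReal (|v' x - v' y| ^ r / ‖x - y‖ ^ D) :=
          Measurable.ennreal_ofReal
            (((measurable_const.sub hvm).abs.pow_const _).div
              ((measurable_const.sub measurable_id).norm.pow_const _))
        have m2 : Measurable fun y : Rd d =>
            ENNReal.ofReal (|u' x - u' y| ^ r / ‖x - y‖ ^ D) :=
          Measurable.ennreal_ofReal
            (((measurable_const.sub hum).abs.pow_const _).div
              ((measurable_const.sub measurable_id).norm.pow_const _))
        rw [lintegral_add_left (m1.const_mul _), lintegral_const_mul _ m1,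
          lintegral_const_mul _ m2]
    _ = ENNReal.ofReal K * gEnergy d s r v' + ENNReal.ofReal K * gEnergy d s r u' := by
        rw [lintegral_add_left (hMv.const_mul _), lintegral_const_mul _ hMv,
          lintegral_const_mul _ hMu]
        rfl
    _ = ENNReal.ofReal K * (gEnergy d s r v' + gEnergy d s r u') := by rw [mul_add]

end Helpers

/-- Lemma 2.4 (for `φ_k`): with `u ∈ W₀^{s,r₁}(Ω)` nonnegative,
`v ∈ W₀^{s,r₁}(Ω) ∩ L^∞`, and `u_k = u + 1/k`, the function
`φ_k = |v|^{r₁}/(u_k^{r₁-1} + u_k^{r₂-1})` lies in `W₀^{s,r₁}(Ω)`, and it satisfies a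
pointwise Lipschitz-type bound `|φ_k(x)-φ_k(y)| ≤ C(|v(x)-v(y)| + |u(x)-u(y)|)`. -/
theorem test_function_phi_k_in_space
    (d : ℕ) (Ω : Set (Rd d)) (s r₁ r₂ : ℝ)
    (hs0 : 0 < s) (hs1 : s < 1) (hr₂ : 1 < r₂) (hr : r₂ < r₁)
    (hΩo : IsOpen Ω) (hΩb : Bornology.IsBounded Ω)
    (u v : Rd d → ℝ) (hu : memW0 d Ω s r₁ u) (hu0 : ∀ x, 0 ≤ u x)
    (hv : memW0 d Ω s r₁ v) (M : ℝ) (hvM : ∀ x, |v x| ≤ M)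
    (k : ℕ) (hk : 0 < k) :
    memW0 d Ω s r₁
      (fun x => |v x| ^ r₁ /
        ((u x + 1 / k) ^ (r₁ - 1) + (u x + 1 / k) ^ (r₂ - 1))) ∧
    ∃ C : ℝ, 0 < C ∧ ∀ x y : Rd d,
      |(|v x| ^ r₁ / ((u x + 1 / k) ^ (r₁ - 1) + (u x + 1 / k) ^ (r₂ - 1))) -
        (|v y| ^ r₁ / ((u y + 1 / k) ^ (r₁ - 1) + (u y + 1 / k) ^ (r₂ - 1)))| ≤
      C * (|v x - v y| + |u x - u y|) := by
  classical
  have hM0 : 0 ≤ M := (abs_nonneg (v 0)).trans (hvM 0)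
  have hk0 : (0:ℝ) < (k:ℝ) := by exact_mod_cast hk
  have hε : (0:ℝ) < 1 / (k:ℝ) := div_pos one_pos hk0
  obtain ⟨C, hC0, hCpt⟩ := ptBound (M := M) (ε := 1/(k:ℝ)) hr₂ hr hM0 hε
  have hr₁1 : (1:ℝ) < r₁ := hr₂.trans hr
  -- the pointwise bound, for any pair of functions with the right pointwise properties
  have main : ∀ u₀ v₀ : Rd d → ℝ, (∀ x, 0 ≤ u₀ x) → (∀ x, |v₀ x| ≤ M) → ∀ x y : Rd d,
      |(|v₀ x| ^ r₁ / ((u₀ x + 1 / k) ^ (r₁ - 1) + (u₀ x + 1 / k) ^ (r₂ - 1))) -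
        (|v₀ y| ^ r₁ / ((u₀ y + 1 / k) ^ (r₁ - 1) + (u₀ y + 1 / k) ^ (r₂ - 1)))| ≤
      C * (|v₀ x - v₀ y| + |u₀ x - u₀ y|) := by
    intro u₀ v₀ h0 hM' x y
    have h := hCpt (u₀ x + 1/(k:ℝ)) (u₀ y + 1/(k:ℝ)) (v₀ x) (v₀ y)
      (le_add_of_nonneg_left (h0 x)) (le_add_of_nonneg_left (h0 y)) (hM' x) (hM' y)
    simpa [add_sub_add_right_eq_sub] using h
  refine ⟨?_, C, hC0, main u v hu0 hvM⟩
  -- now membership in W₀^{s,r₁}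
  have hm0 : 0 < (1/(k:ℝ)) ^ (r₁-1) + (1/(k:ℝ)) ^ (r₂-1) := by positivity
  have hden : ∀ t : ℝ, 0 ≤ t →
      (1/(k:ℝ)) ^ (r₁-1) + (1/(k:ℝ)) ^ (r₂-1) ≤
        (t + 1/(k:ℝ)) ^ (r₁-1) + (t + 1/(k:ℝ)) ^ (r₂-1) := fun t ht =>
    add_le_add (Real.rpow_le_rpow hε.le (le_add_of_nonneg_left ht) (by linarith))
      (Real.rpow_le_rpow hε.le (le_add_of_nonneg_left ht) (by linarith))
  have hdenpos : ∀ t : ℝ, 0 ≤ t →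
      0 < (t + 1/(k:ℝ)) ^ (r₁-1) + (t + 1/(k:ℝ)) ^ (r₂-1) := fun t ht =>
    lt_of_lt_of_le hm0 (hden t ht)
  have hB : ∀ x : Rd d,
      |(|v x| ^ r₁ / ((u x + 1 / k) ^ (r₁ - 1) + (u x + 1 / k) ^ (r₂ - 1)))| ≤
        M ^ r₁ / ((1/(k:ℝ)) ^ (r₁-1) + (1/(k:ℝ)) ^ (r₂-1)) := by
    intro x
    rw [abs_of_nonneg (div_nonneg (Real.rpow_nonneg (abs_nonneg _) _)
      (hdenpos (u x) (hu0 x)).le)]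
    exact div_le_div₀ (Real.rpow_nonneg hM0 _)
      (Real.rpow_le_rpow (abs_nonneg _) (hvM x) (by linarith))
      hm0 (hden (u x) (hu0 x))
  have hout : ∀ x ∉ Ω,
      (|v x| ^ r₁ / ((u x + 1 / k) ^ (r₁ - 1) + (u x + 1 / k) ^ (r₂ - 1))) = 0 := by
    intro x hx
    rw [hv.2.2 x hx, abs_zero, Real.zero_rpow (by linarith : r₁ ≠ 0), zero_div]
  -- measurable modifications of u and v
  obtain ⟨um, humeas, huae⟩ : ∃ um : Rd d → ℝ, StronglyMeasurable um ∧ u =ᵐ[volume] um :=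
    ⟨hu.1.aestronglyMeasurable.mk u, hu.1.aestronglyMeasurable.stronglyMeasurable_mk,
      hu.1.aestronglyMeasurable.ae_eq_mk⟩
  obtain ⟨vm, hvmeas, hvae⟩ : ∃ vm : Rd d → ℝ, StronglyMeasurable vm ∧ v =ᵐ[volume] vm :=
    ⟨hv.1.aestronglyMeasurable.mk v, hv.1.aestronglyMeasurable.stronglyMeasurable_mk,
      hv.1.aestronglyMeasurable.ae_eq_mk⟩
  have hu'meas : Measurable fun x => max (um x) 0 :=
    humeas.measurable.max measurable_const
  have hv'meas : Measurable fun x => max (min (vm x) M) (-M) :=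
    (hvmeas.measurable.min measurable_const).max measurable_const
  have huae' : u =ᵐ[volume] fun x => max (um x) 0 := by
    filter_upwards [huae] with x hx
    rw [← hx, max_eq_left (hu0 x)]
  have hvae' : v =ᵐ[volume] fun x => max (min (vm x) M) (-M) := by
    filter_upwards [hvae] with x hx
    rw [← hx, min_eq_left (abs_le.1 (hvM x)).2, max_eq_left (abs_le.1 (hvM x)).1]
  have hu'0 : ∀ x, 0 ≤ max (um x) 0 := fun x => le_max_right _ _
  have hv'M : ∀ x, |max (min (vm x) M) (-M)| ≤ M := fun x =>
    abs_le.2 ⟨le_max_right _ _, max_le ((min_le_right _ _)) (neg_le_self hM0)⟩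
  have hφ'meas : Measurable fun x =>
      |max (min (vm x) M) (-M)| ^ r₁ /
        ((max (um x) 0 + 1 / k) ^ (r₁ - 1) + (max (um x) 0 + 1 / k) ^ (r₂ - 1)) :=
    (hv'meas.abs.pow_const _).div
      (((hu'meas.add_const _).pow_const _).add ((hu'meas.add_const _).pow_const _))
  have hφae : (fun x => |v x| ^ r₁ /
        ((u x + 1 / k) ^ (r₁ - 1) + (u x + 1 / k) ^ (r₂ - 1))) =ᵐ[volume]
      fun x => |max (min (vm x) M) (-M)| ^ r₁ /
        ((max (um x) 0 + 1 / k) ^ (r₁ - 1) + (max (um x) 0 + 1 / k) ^ (r₂ - 1)) := by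
    filter_upwards [huae', hvae'] with x h1 h2
    simp only [← h1, ← h2]
  refine ⟨?_, ?_, hout⟩
  · -- Memℒp
    refine MemLp.of_le (memLp_indicator_const _ hΩo.measurableSet
        (M ^ r₁ / ((1/(k:ℝ)) ^ (r₁-1) + (1/(k:ℝ)) ^ (r₂-1)))
        (Or.inr hΩb.measure_lt_top.ne))
      (hφ'meas.aestronglyMeasurable.congr hφae.symm)
      (Filter.Eventually.of_forall fun x => ?_)
    by_cases hx : x ∈ Ω
    · rw [Set.indicator_of_mem hx, Real.norm_eq_abs, Real.norm_eq_abs]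
      exact (hB x).trans (le_abs_self _)
    · rw [hout x hx]
      simp [norm_nonneg]
  · -- finite energy
    have hEn := energyBound (d := d) (s := s) (r := r₁) (C := C) (by linarith) hC0.le
      hu'meas hv'meas (main _ _ hu'0 hv'M)
    have hE1 := gEnergy_congr (d := d) (s := s) (r := r₁) hφae
    have hEv := gEnergy_congr (d := d) (s := s) (r := r₁) hvae'
    have hEu := gEnergy_congr (d := d) (s := s) (r := r₁) huae'
    rw [hE1]
    exact ne_top_of_le_ne_top
      (ENNReal.mul_ne_top ENNReal.ofReal_ne_top
        (ENNReal.add_ne_top.2 ⟨hEv ▸ hv.2.1, hEu ▸ hu.2.1⟩))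
      hEn


end
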